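/- Let A ∈ Sp(2n,ℝ), let λ ∈ {1, −1}, and let k ≥ 1 be an integer. Then the bilinear form Q̂ₖ defined on Ker((A − λ Id)^{2k}) by Q̂ₖ(v, w) = Ω₀((A − λ Id)^k v, (A − λ Id)^{k−1} w) is symmetric: Q̂ₖ(v, w) = Q̂ₖ(w, v) for all v, w ∈ Ker((A − λ Id)^{2k}). -/

import Mathlib

open Matrix

noncomputable section

/-- `2n × 2n` real matrices, with rows/columns indexed by `Fin n ⊕ Fin n`. -/
abbrev MatN (n : ℕ) := Matrix (Fin n ⊕ Fin n) (Fin n ⊕ Fin n) ℝ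

/-- `ℝ^{2n}`, with coordinates indexed by `Fin n ⊕ Fin n`. -/
abbrev Vn (n : ℕ) := (Fin n ⊕ Fin n) → ℝ

/-- the standard symplectic form `Ω₀(v,w) = ⟨J₀ v, w⟩` on `ℝ^{2n}` -/
def Om (n : ℕ) (v w : Vn n) : ℝ := (Matrix.J (Fin n) ℝ).mulVec v ⬝ᵥ w

lemma om_eq' {n : ℕ} (M N : MatN n) (x y : Vn n) :
    Om n (M.mulVec x) (N.mulVec y) = ((Nᵀ * Matrix.J (Fin n) ℝ * M).mulVec x) ⬝ᵥ y := by
  unfold Om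
  rw [mulVec_mulVec, dotProduct_mulVec, ← mulVec_transpose, mulVec_mulVec, Matrix.mul_assoc]

lemma om_antisymm' {n : ℕ} (x y : Vn n) : Om n x y = - Om n y x := by
  unfold Om
  rw [dotProduct_comm, dotProduct_mulVec, ← mulVec_transpose, Matrix.J_transpose,
    Matrix.neg_mulVec, neg_dotProduct]

/-- For a symplectic matrix `A`, `λ = ±1` and `k ≥ 1`, the bilinear form
`Q̂ₖ(v,w) = Ω₀((A - λ Id)^k v, (A - λ Id)^{k-1} w)` on `Ker((A - λ Id)^{2k})`
is symmetric. -/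
theorem Qhat_symmetric (n : ℕ) (A : MatN n)
    (hA : Aᵀ * Matrix.J (Fin n) ℝ * A = Matrix.J (Fin n) ℝ)
    (lam : ℝ) (hlam : lam = 1 ∨ lam = -1) (k : ℕ) (hk : 1 ≤ k)
    (v w : Vn n)
    (hv : ((A - lam • (1 : MatN n)) ^ (2 * k)).mulVec v = 0)
    (hw : ((A - lam • (1 : MatN n)) ^ (2 * k)).mulVec w = 0) :
    Om n (((A - lam • (1 : MatN n)) ^ k).mulVec v)
        (((A - lam • (1 : MatN n)) ^ (k - 1)).mulVec w) =
      Om n (((A - lam • (1 : MatN n)) ^ k).mulVec w)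
        (((A - lam • (1 : MatN n)) ^ (k - 1)).mulVec v) := by
  set B : MatN n := A - lam • (1 : MatN n) with hB
  set J : MatN n := Matrix.J (Fin n) ℝ with hJ
  have h2 : lam * lam = 1 := by rcases hlam with h | h <;> rw [h] <;> norm_num
  -- matrix identity: Bᵀ J B + λ (J B) + λ (Bᵀ J) = 0
  have hmat : Bᵀ * J * B + lam • (J * B) + lam • (Bᵀ * J) = 0 := by
    simp only [hB, hJ, transpose_sub, transpose_smul, transpose_one, sub_mul, mul_sub,
      smul_mul_assoc, mul_smul_comm, one_mul, mul_one, smul_smul, hA, h2, smul_sub, one_smul]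
    rw [show Aᵀ * Matrix.J (Fin n) ℝ * A = Matrix.J (Fin n) ℝ from hA]
    abel
  -- core bilinear identity: Ω(Bx, By) + λΩ(Bx, y) + λΩ(x, By) = 0
  have hcore : ∀ x y : Vn n,
      Om n (B.mulVec x) (B.mulVec y) + lam * Om n (B.mulVec x) y
        + lam * Om n x (B.mulVec y) = 0 := by
    intro x y
    have e1 := om_eq' B B x y
    have e2 : Om n (B.mulVec x) y = ((J * B).mulVec x) ⬝ᵥ y := by
      have := om_eq' B (1 : MatN n) x y
      simpa using this
    have e3 : Om n x (B.mulVec y) = ((Bᵀ * J).mulVec x) ⬝ᵥ y := by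
      have := om_eq' (1 : MatN n) B x y
      simpa using this
    rw [e1, e2, e3]
    calc ((Bᵀ * J * B).mulVec x) ⬝ᵥ y + lam * (((J * B).mulVec x) ⬝ᵥ y)
          + lam * (((Bᵀ * J).mulVec x) ⬝ᵥ y)
        = ((Bᵀ * J * B + lam • (J * B) + lam • (Bᵀ * J)).mulVec x) ⬝ᵥ y := by
          simp [Matrix.add_mulVec, Matrix.smul_mulVec, add_dotProduct, smul_dotProduct,
            smul_eq_mul]
      _ = 0 := by rw [hmat]; simp
  -- vanishing of high powers applied to `w`
  have hpw : ∀ b, 2 * k ≤ b → (B ^ b).mulVec w = 0 := by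
    intro b hb
    have : B ^ b = B ^ (b - 2 * k) * B ^ (2 * k) := by
      rw [← pow_add]; congr 1; omega
    rw [this, ← mulVec_mulVec, hw, mulVec_zero]
  -- step relation: S(a+1,b) = -λ S(a+1,b+1) - S(a,b+1)
  have hstep : ∀ a b : ℕ,
      Om n ((B ^ (a + 1)).mulVec v) ((B ^ b).mulVec w)
        = -lam * Om n ((B ^ (a + 1)).mulVec v) ((B ^ (b + 1)).mulVec w)
          - Om n ((B ^ a).mulVec v) ((B ^ (b + 1)).mulVec w) := by
    intro a b
    have h := hcore ((B ^ a).mulVec v) ((B ^ b).mulVec w)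
    rw [mulVec_mulVec, mulVec_mulVec, ← pow_succ', ← pow_succ'] at h
    linear_combination lam * h - (Om n ((B ^ (a + 1)).mulVec v) ((B ^ b).mulVec w)
      + Om n ((B ^ a).mulVec v) ((B ^ (b + 1)).mulVec w)) * h2
  -- main vanishing lemma: S(a,b) = 0 whenever a + b ≥ 2k
  have key : ∀ a b : ℕ, 2 * k ≤ a + b →
      Om n ((B ^ a).mulVec v) ((B ^ b).mulVec w) = 0 := by
    intro a
    induction a with
    | zero =>
      intro b hb
      rw [hpw b (by omega)]
      simp [Om]
    | succ a ih =>
      have inner : ∀ d b, 2 * k - b ≤ d → 2 * k ≤ (a + 1) + b →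
          Om n ((B ^ (a + 1)).mulVec v) ((B ^ b).mulVec w) = 0 := by
        intro d
        induction d with
        | zero =>
          intro b hd _
          rw [hpw b (by omega)]; simp [Om]
        | succ d ihd =>
          intro b hd hb
          by_cases hb2 : 2 * k ≤ b
          · rw [hpw b hb2]; simp [Om]
          · rw [hstep a b, ihd (b + 1) (by omega) (by omega), ih (b + 1) (by omega)]
            ring
      intro b hb
      exact inner (2 * k - b) b le_rfl hb
  -- conclusion
  have hk1 : k - 1 + 1 = k := by omega
  have h := hcore ((B ^ (k - 1)).mulVec v) ((B ^ (k - 1)).mulVec w)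
  rw [mulVec_mulVec, mulVec_mulVec, ← pow_succ'] at h
  rw [hk1] at h
  have hz : Om n ((B ^ k).mulVec v) ((B ^ k).mulVec w) = 0 := key k k (by omega)
  rw [hz] at h
  rw [om_antisymm' ((B ^ k).mulVec w) ((B ^ (k - 1)).mulVec v)]
  rcases hlam with hl | hl <;> rw [hl] at h <;> linarith
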